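/- In a graph G, a set of vertices X is a module if every vertex outside X is adjacent to all vertices of X or to none of them. Show that a graph G is prime (has no nontrivial modules) if and only if for every three pairwise distinct vertices x1, x2, x3, there exists a chain from {x1, x2} to x3. -/

import Mathlib

variable {V : Type*}

def GraphModule (G : SimpleGraph V) (X : Set V) : Prop :=
  ∀ v ∉ X, (∀ x ∈ X, G.Adj v x) ∨ (∀ x ∈ X, ¬ G.Adj v x)

def IsPrimeGraph (G : SimpleGraph V) : Prop :=
  ∀ X : Set V, GraphModule G X → X.Subsingleton ∨ X = Set.univ

structure GraphChain (G : SimpleGraph V) (I : Set V) (w : V) (m : ℕ)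
    (v : Fin (m + 1) → V) : Prop where
  two_le : 2 ≤ m
  inj : Function.Injective v
  mem0 : v 0 ∈ I
  mem1 : v 1 ∈ I
  not_mem : ∀ i : Fin (m + 1), 2 ≤ (i : ℕ) → v i ∉ I
  last_eq : v (Fin.last m) = w
  uniq : ∀ i : Fin (m + 1), 0 < (i : ℕ) →
    (∀ j : Fin (m + 1), (j : ℕ) < (i : ℕ) → (G.Adj (v i) (v j) ↔ (j : ℕ) + 1 = (i : ℕ))) ∨
    (∀ j : Fin (m + 1), (j : ℕ) < (i : ℕ) → (¬ G.Adj (v i) (v j) ↔ (j : ℕ) + 1 = (i : ℕ)))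

def HasChain (G : SimpleGraph V) (I : Set V) (w : V) : Prop :=
  ∃ m v, GraphChain G I w m v

section Aux

variable {G : SimpleGraph V} {I : Set V} {w : V} {m : ℕ} {v : Fin (m + 1) → V}

lemma fin_val_one_eq {n : ℕ} (h : 1 ≤ n) : ((1 : Fin (n + 1)) : ℕ) = 1 := by
  rw [Fin.val_one']; exact Nat.mod_eq_of_lt (by omega)

lemma chain_trunc (hc : GraphChain G I w m v) (k : ℕ) (hk2 : 2 ≤ k) (hkm : k ≤ m) :
    GraphChain G I (v ⟨k, by omega⟩) k (fun i : Fin (k + 1) => v ⟨(i : ℕ), by omega⟩) := by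
  have h2 := hc.two_le
  constructor
  · exact hk2
  · intro i j hij
    have := hc.inj hij
    exact Fin.ext (by simpa [Fin.ext_iff] using this)
  · show v ⟨((0 : Fin (k + 1)) : ℕ), by omega⟩ ∈ I
    convert hc.mem0 using 2 <;> exact Fin.ext (by simp)
  · show v ⟨((1 : Fin (k + 1)) : ℕ), by omega⟩ ∈ I
    convert hc.mem1 using 2 <;>
      exact Fin.ext (by
        show ((1 : Fin (k + 1)) : ℕ) = ((1 : Fin (m + 1)) : ℕ)
        rw [fin_val_one_eq (by omega), fin_val_one_eq (by omega)])
  · intro i hi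
    exact hc.not_mem ⟨(i : ℕ), by omega⟩ hi
  · rfl
  · intro i hi
    rcases hc.uniq ⟨(i : ℕ), by omega⟩ hi with h | h
    · exact Or.inl fun j hj => h ⟨(j : ℕ), by omega⟩ hj
    · exact Or.inr fun j hj => h ⟨(j : ℕ), by omega⟩ hj

lemma chain_mem (hc : GraphChain G I w m v) (i : Fin (m + 1)) :
    v i ∈ I ∪ {x | HasChain G I x} := by
  have h2 := hc.two_le
  have hlt := i.isLt
  rcases Nat.lt_or_ge (i : ℕ) 2 with hi2 | hi2
  · left
    rcases Nat.lt_or_ge (i : ℕ) 1 with hi1 | hi1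
    · have : i = 0 := Fin.ext (by simp only [Fin.val_zero]; omega)
      rw [this]; exact hc.mem0
    · have : i = 1 := Fin.ext (by rw [fin_val_one_eq (by omega)]; omega)
      rw [this]; exact hc.mem1
  · right
    exact ⟨(i : ℕ), _, chain_trunc hc (i : ℕ) hi2 (by omega)⟩

lemma chain_snoc (hc : GraphChain G I w m v) (u : V) (hu : u ∉ I) (hur : ∀ i, u ≠ v i)
    (k : ℕ) (hk1 : 1 ≤ k) (hkm : k ≤ m)
    (hyp : ((∀ j : Fin (m + 1), (j : ℕ) < k → G.Adj u (v j)) ∧ ¬ G.Adj u (v ⟨k, by omega⟩))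
        ∨ ((∀ j : Fin (m + 1), (j : ℕ) < k → ¬ G.Adj u (v j)) ∧ G.Adj u (v ⟨k, by omega⟩))) :
    HasChain G I u := by
  refine ⟨k + 1, fun i : Fin (k + 2) => if h : (i : ℕ) ≤ k then v ⟨(i : ℕ), by omega⟩ else u, ?_⟩
  constructor
  · omega
  · intro i j hij
    have hi' := i.isLt
    have hj' := j.isLt
    by_cases hi : (i : ℕ) ≤ k <;> by_cases hj : (j : ℕ) ≤ k
    · simp only [dif_pos hi, dif_pos hj] at hij
      have := hc.inj hij
      exact Fin.ext (by simpa [Fin.ext_iff] using this)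
    · simp only [dif_pos hi, dif_neg hj] at hij
      exact absurd hij.symm (hur _)
    · simp only [dif_neg hi, dif_pos hj] at hij
      exact absurd hij (hur _)
    · exact Fin.ext (by omega)
  · show (if h : ((0 : Fin (k + 2)) : ℕ) ≤ k then v ⟨((0 : Fin (k + 2)) : ℕ), by omega⟩ else u) ∈ I
    rw [dif_pos (by simp)]
    convert hc.mem0 using 2 <;> exact Fin.ext (by simp)
  · show (if h : ((1 : Fin (k + 2)) : ℕ) ≤ k then v ⟨((1 : Fin (k + 2)) : ℕ), by omega⟩ else u) ∈ I
    rw [dif_pos (by rw [Fin.val_one]; omega)]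
    convert hc.mem1 using 2 <;>
      exact Fin.ext (by
        show ((1 : Fin (k + 2)) : ℕ) = ((1 : Fin (m + 1)) : ℕ)
        rw [Fin.val_one, fin_val_one_eq (by omega)])
  · intro i hi
    by_cases hik : (i : ℕ) ≤ k
    · simp only [dif_pos hik]
      exact hc.not_mem ⟨(i : ℕ), by omega⟩ hi
    · simp only [dif_neg hik]
      exact hu
  · show (if h : ((Fin.last (k + 1)) : ℕ) ≤ k then v ⟨((Fin.last (k + 1)) : ℕ), by omega⟩ else u) = u
    rw [dif_neg (by simp [Fin.last])]
  · intro i hi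
    have hi' := i.isLt
    by_cases hik : (i : ℕ) ≤ k
    · simp only [dif_pos hik]
      rcases hc.uniq ⟨(i : ℕ), by omega⟩ hi with h | h
      · left
        intro j hj
        have hjk : (j : ℕ) ≤ k := by omega
        simp only [dif_pos hjk]
        exact h ⟨(j : ℕ), by omega⟩ hj
      · right
        intro j hj
        have hjk : (j : ℕ) ≤ k := by omega
        simp only [dif_pos hjk]
        exact h ⟨(j : ℕ), by omega⟩ hj
    · have hik' : (i : ℕ) = k + 1 := by omega
      simp only [dif_neg hik]
      rcases hyp with ⟨hall, hlast⟩ | ⟨hall, hlast⟩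
      · right
        intro j hj
        have hjk : (j : ℕ) ≤ k := by omega
        simp only [dif_pos hjk]
        rcases Nat.lt_or_ge (j : ℕ) k with hjk' | hjk'
        · exact iff_of_false (fun hn => hn (hall ⟨(j : ℕ), by omega⟩ hjk')) (by omega)
        · have hjq : (j : ℕ) = k := by omega
          have he : v ⟨(j : ℕ), by omega⟩ = v ⟨k, by omega⟩ := by congr 1; exact Fin.ext hjq
          rw [he]
          exact iff_of_true hlast (by omega)
      · left
        intro j hj
        have hjk : (j : ℕ) ≤ k := by omega
        simp only [dif_pos hjk]
        rcases Nat.lt_or_ge (j : ℕ) k with hjk' | hjk'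
        · exact iff_of_false (hall ⟨(j : ℕ), by omega⟩ hjk') (by omega)
        · have hjq : (j : ℕ) = k := by omega
          have he : v ⟨(j : ℕ), by omega⟩ = v ⟨k, by omega⟩ := by congr 1; exact Fin.ext hjq
          rw [he]
          exact iff_of_true hlast (by omega)

lemma chain_extend (hc : GraphChain G I w m v) (u : V) (hu : u ∉ I) (hur : ∀ i, u ≠ v i)
    (a b : Fin (m + 1)) (ha : G.Adj u (v a)) (hb : ¬ G.Adj u (v b)) :
    HasChain G I u := by
  classical
  have hPm : ∃ k, ∃ i j : Fin (m + 1),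
      (i : ℕ) ≤ k ∧ (j : ℕ) ≤ k ∧ G.Adj u (v i) ∧ ¬ G.Adj u (v j) :=
    ⟨m, a, b, by omega, by omega, ha, hb⟩
  set k := Nat.find hPm with hkdef
  obtain ⟨i0, j0, hi0, hj0, hai0, hbj0⟩ := Nat.find_spec hPm
  rw [← hkdef] at hi0 hj0
  have hmin : ∀ l, l < k → ¬ ∃ i j : Fin (m + 1),
      (i : ℕ) ≤ l ∧ (j : ℕ) ≤ l ∧ G.Adj u (v i) ∧ ¬ G.Adj u (v j) :=
    fun l hl => Nat.find_min hPm hl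
  have hk1 : 1 ≤ k := by
    by_contra h
    have h0 : (i0 : ℕ) = 0 ∧ (j0 : ℕ) = 0 := by omega
    have : i0 = j0 := Fin.ext (by omega)
    exact hbj0 (this ▸ hai0)
  have hkm : k ≤ m :=
    Nat.find_le ⟨a, b, by omega, by omega, ha, hb⟩
  by_cases h0 : G.Adj u (v ⟨0, by omega⟩)
  · have hall : ∀ j : Fin (m + 1), (j : ℕ) < k → G.Adj u (v j) := by
      intro j hj
      by_contra hnj
      exact hmin (k - 1) (by omega) ⟨⟨0, by omega⟩, j, Nat.zero_le _, by omega, h0, hnj⟩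
    have hklast : ¬ G.Adj u (v ⟨k, by omega⟩) := by
      have hjq : (j0 : ℕ) = k := by
        by_contra hne
        exact hmin (k - 1) (by omega) ⟨⟨0, by omega⟩, j0, Nat.zero_le _, by omega, h0, hbj0⟩
      have he : v ⟨k, by omega⟩ = v j0 := by congr 1; exact Fin.ext hjq.symm
      rw [he]; exact hbj0
    exact chain_snoc hc u hu hur k hk1 hkm (Or.inl ⟨hall, hklast⟩)
  · have hall : ∀ j : Fin (m + 1), (j : ℕ) < k → ¬ G.Adj u (v j) := by
      intro j hj
      intro hnj
      exact hmin (k - 1) (by omega) ⟨j, ⟨0, by omega⟩, by omega, Nat.zero_le _, hnj, h0⟩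
    have hklast : G.Adj u (v ⟨k, by omega⟩) := by
      have hiq : (i0 : ℕ) = k := by
        by_contra hne
        exact hmin (k - 1) (by omega) ⟨i0, ⟨0, by omega⟩, by omega, Nat.zero_le _, hai0, h0⟩
      have he : v ⟨k, by omega⟩ = v i0 := by congr 1; exact Fin.ext hiq.symm
      rw [he]; exact hai0
    exact chain_snoc hc u hu hur k hk1 hkm (Or.inr ⟨hall, hklast⟩)

lemma base_chain (G : SimpleGraph V) (I : Set V) (p q u : V) (hp : p ∈ I) (hq : q ∈ I)
    (hu : u ∉ I) (hadj : G.Adj u p) (hnadj : ¬ G.Adj u q) : HasChain G I u := by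
  classical
  have hpq : p ≠ q := fun h => hnadj (h ▸ hadj)
  have hup : u ≠ p := hadj.ne
  have huq : u ≠ q := fun h => hu (h ▸ hq)
  set f : Fin 3 → V := fun i => if (i : ℕ) = 0 then q else if (i : ℕ) = 1 then p else u with hf
  have f0 : ∀ i : Fin 3, (i : ℕ) = 0 → f i = q := by intro i h; exact if_pos h
  have f1 : ∀ i : Fin 3, (i : ℕ) = 1 → f i = p := by
    intro i h; show (if (i : ℕ) = 0 then q else if (i : ℕ) = 1 then p else u) = p
    rw [if_neg (show ¬ (i : ℕ) = 0 by omega), if_pos h]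
  have f2 : ∀ i : Fin 3, (i : ℕ) = 2 → f i = u := by
    intro i h; show (if (i : ℕ) = 0 then q else if (i : ℕ) = 1 then p else u) = u
    rw [if_neg (show ¬ (i : ℕ) = 0 by omega), if_neg (show ¬ (i : ℕ) = 1 by omega)]
  refine ⟨2, f, ?_, ?_, ?_, ?_, ?_, ?_, ?_⟩
  · omega
  · intro i j hij
    have hi := i.isLt
    have hj := j.isLt
    apply Fin.ext
    by_contra hne
    rcases (by omega : (i : ℕ) = 0 ∨ (i : ℕ) = 1 ∨ (i : ℕ) = 2) with h | h | h <;>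
      rcases (by omega : (j : ℕ) = 0 ∨ (j : ℕ) = 1 ∨ (j : ℕ) = 2) with h' | h' | h'
    · omega
    · rw [f0 i h, f1 j h'] at hij; exact hpq hij.symm
    · rw [f0 i h, f2 j h'] at hij; exact huq hij.symm
    · rw [f1 i h, f0 j h'] at hij; exact hpq hij
    · omega
    · rw [f1 i h, f2 j h'] at hij; exact hup hij.symm
    · rw [f2 i h, f0 j h'] at hij; exact huq hij
    · rw [f2 i h, f1 j h'] at hij; exact hup hij
    · omega
  · rw [f0 0 rfl]; exact hq
  · rw [f1 1 rfl]; exact hp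
  · intro i hi
    have h3 := i.isLt
    rw [f2 i (by omega)]
    exact hu
  · rw [f2 (Fin.last 2) rfl]
  · intro i hi
    have hi3 := i.isLt
    rcases (by omega : (i : ℕ) = 1 ∨ (i : ℕ) = 2) with h | h
    · rw [f1 i h]
      by_cases hqp : G.Adj p q
      · left
        intro j hj
        have h0 : (j : ℕ) = 0 := by omega
        rw [f0 j h0, h0, h]
        simpa using hqp
      · right
        intro j hj
        have h0 : (j : ℕ) = 0 := by omega
        rw [f0 j h0, h0, h]
        simpa using hqp
    · rw [f2 i h]
      left
      intro j hj
      rcases (by omega : (j : ℕ) = 0 ∨ (j : ℕ) = 1) with h' | h'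
      · rw [f0 j h', h', h]
        simpa using hnadj
      · rw [f1 j h', h', h]
        simpa using hadj

end Aux

theorem statement0 (G : SimpleGraph V) :
    IsPrimeGraph G ↔
      ∀ x1 x2 x3 : V, x1 ≠ x2 → x1 ≠ x3 → x2 ≠ x3 → HasChain G {x1, x2} x3 := by
  constructor
  · intro hp x1 x2 x3 h12 h13 h23
    classical
    set I : Set V := {x1, x2} with hI
    have hx1I : x1 ∈ I := Or.inl rfl
    have hx2I : x2 ∈ I := Or.inr rfl
    set W : Set V := I ∪ {x | HasChain G I x} with hW
    have hmod : GraphModule G W := by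
      intro u hu
      have huI : u ∉ I := fun h => hu (Or.inl h)
      by_contra hcon
      push_neg at hcon
      obtain ⟨⟨p, hpW, hnp⟩, q, hqW, haq⟩ := hcon
      apply hu
      right
      by_cases h1 : G.Adj u x1 <;> by_cases h2 : G.Adj u x2
      · -- u adjacent to both x1, x2; p with ¬Adj u p must be a chain endpoint
        have hpI : p ∉ I := by
          intro hmem
          rcases (hmem : p = x1 ∨ p = x2) with rfl | rfl
          · exact hnp h1
          · exact hnp h2
        rcases hpW with hin | hch
        · exact absurd hin hpI
        obtain ⟨m, v, hc⟩ := hch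
        have hur : ∀ i, u ≠ v i := by
          intro i heq
          exact hu (heq ▸ chain_mem hc i)
        have hv0 : G.Adj u (v 0) := by
          rcases (hc.mem0 : v 0 = x1 ∨ v 0 = x2) with h | h
          · rw [h]; exact h1
          · rw [h]; exact h2
        have hvlast : ¬ G.Adj u (v (Fin.last m)) := by
          rw [hc.last_eq]; exact hnp
        exact chain_extend hc u huI hur 0 (Fin.last m) hv0 hvlast
      · exact base_chain G I x1 x2 u hx1I hx2I huI h1 h2
      · exact base_chain G I x2 x1 u hx2I hx1I huI h2 h1
      · -- u nonadjacent to both; q with Adj u q must be a chain endpoint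
        have hqI : q ∉ I := by
          intro hmem
          rcases (hmem : q = x1 ∨ q = x2) with rfl | rfl
          · exact h1 haq
          · exact h2 haq
        rcases hqW with hin | hch
        · exact absurd hin hqI
        obtain ⟨m, v, hc⟩ := hch
        have hur : ∀ i, u ≠ v i := by
          intro i heq
          exact hu (heq ▸ chain_mem hc i)
        have hv0 : ¬ G.Adj u (v 0) := by
          rcases (hc.mem0 : v 0 = x1 ∨ v 0 = x2) with h | h
          · rw [h]; exact h1
          · rw [h]; exact h2
        have hvlast : G.Adj u (v (Fin.last m)) := by
          rw [hc.last_eq]; exact haq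
        exact chain_extend hc u huI hur (Fin.last m) 0 hvlast hv0
    rcases hp W hmod with hs | huniv
    · exact absurd (hs (Or.inl hx1I) (Or.inl hx2I)) h12
    · have hx3 : x3 ∈ W := huniv ▸ Set.mem_univ x3
      rcases hx3 with h | h
      · rcases (h : x3 = x1 ∨ x3 = x2) with rfl | rfl
        · exact absurd rfl h13.symm
        · exact absurd rfl h23.symm
      · exact h
  · intro h X hX
    by_contra hcon
    push_neg at hcon
    obtain ⟨hns, hne⟩ := hcon
    unfold Set.Nontrivial at hns
    obtain ⟨x1, hx1, x2, hx2, h12⟩ := hns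
    have hex : ∃ x3, x3 ∉ X := by
      by_contra h'
      push_neg at h'
      exact hne (Set.eq_univ_iff_forall.mpr h')
    obtain ⟨x3, hx3⟩ := hex
    obtain ⟨m, v, hc⟩ := h x1 x2 x3 h12 (fun e => hx3 (e ▸ hx1)) (fun e => hx3 (e ▸ hx2))
    have h2 := hc.two_le
    have key : ∀ n : ℕ, ∀ hn : n < m + 1, v ⟨n, hn⟩ ∈ X := by
      intro n
      induction n using Nat.strong_induction_on with
      | _ n ih =>
        intro hn
        rcases Nat.lt_or_ge n 2 with hn2 | hn2
        · rcases Nat.lt_or_ge n 1 with hn1 | hn1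
          · have : (⟨n, hn⟩ : Fin (m + 1)) = 0 := Fin.ext (by simp only [Fin.val_zero]; omega)
            rw [this]
            rcases (hc.mem0 : v 0 = x1 ∨ v 0 = x2) with h | h
            · rw [h]; exact hx1
            · rw [h]; exact hx2
          · have : (⟨n, hn⟩ : Fin (m + 1)) = 1 := Fin.ext (by
              show n = ((1 : Fin (m + 1)) : ℕ)
              rw [fin_val_one_eq (by omega)]; omega)
            rw [this]
            rcases (hc.mem1 : v 1 = x1 ∨ v 1 = x2) with h | h
            · rw [h]; exact hx1
            · rw [h]; exact hx2
        · by_contra hv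
          have hv0 : v ⟨0, by omega⟩ ∈ X := ih 0 (by omega) (by omega)
          have hvp : v ⟨n - 1, by omega⟩ ∈ X := ih (n - 1) (by omega) (by omega)
          rcases hX _ hv with hall | hnone
          · rcases hc.uniq ⟨n, hn⟩ (by show 0 < n; omega) with hq | hq
            · have := hq ⟨0, by omega⟩ (by show (0:ℕ) < n; omega)
              exact absurd (this.mp (hall _ hv0)) (by show ¬((0:ℕ) + 1 = n); omega)
            · have := hq ⟨n - 1, by omega⟩ (by show n - 1 < n; omega)
              exact absurd (hall _ hvp) (this.mpr (by show n - 1 + 1 = n; omega))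
          · rcases hc.uniq ⟨n, hn⟩ (by show 0 < n; omega) with hq | hq
            · have := hq ⟨n - 1, by omega⟩ (by show n - 1 < n; omega)
              exact hnone _ hvp (this.mpr (by show n - 1 + 1 = n; omega))
            · have := hq ⟨0, by omega⟩ (by show (0:ℕ) < n; omega)
              exact absurd (this.mp (hnone _ hv0)) (by show ¬((0:ℕ) + 1 = n); omega)
    have := key m (by omega)
    have hlast : v ⟨m, by omega⟩ = x3 := hc.last_eq
    rw [hlast] at this
    exact hx3 this
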